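/- (Theorem 3.1) Let d ≥ 1, r > 0, θ ∈ S^{d-1}. Let w_1, w_2 : ℤ^d → ℂ \ {0} and u : ℤ^d → ℂ satisfy w_1(z) = w_2(z) = 1 and u(z) = 0 for all z ∉ B_r ∩ ℤ^d. Define F_θ : ℤ^d → GL(2,ℂ) by F_θ(z) = [[w_1(z), w_2(z)u(z)],[0,1]]. Then for every oriented line γ with direction θ containing at least one lattice point, S(F_θ)(γ) = [[∏_{y ∈ γ ∩ ℤ^d} w_1(y), P_W u(γ)],[0,1]], where P_W u(γ) = Σ_{y ∈ γ ∩ ℤ^d} W(y,θ) u(y) and W(y,θ) = w_2(y) · ∏_{ζ ∈ γ ∩ ℤ^d, (ζ−y)·θ > 0} w_1(ζ). -/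

import Mathlib

noncomputable section

open Matrix

/-- Embedding of the lattice `ℤ^d` into Euclidean `ℝ^d`. -/
def emb {d : ℕ} (z : Fin d → ℤ) : EuclideanSpace ℝ (Fin d) := WithLp.toLp 2 (fun i => (z i : ℝ))

/- Ordered product of `Φ` over `supp`: the factors are multiplied so that larger values
of `key` contribute factors further to the left (the value is `1` if no strictly
`key`-decreasing enumeration of `supp` by a list exists). -/
open Classical in
noncomputable def oprodBy {α G : Type*} [Monoid G] (Φ : α → G) (key : α → ℝ) (supp : Set α) : G :=
  if h : ∃ l : List α, l.Pairwise (fun a b => key b < key a) ∧ ∀ a, a ∈ l ↔ a ∈ supp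
  then (h.choose.map Φ).prod else 1

/-- The discrete non-abelian X-ray transform of `F` along the oriented line through `x`
with direction `θ`: the ordered product of `F y` over lattice points `y` on the line,
the point furthest along the orientation contributing the leftmost factor. -/
noncomputable def discS {d : ℕ} {G : Type*} [Monoid G] (F : (Fin d → ℤ) → G)
    (x θ : EuclideanSpace ℝ (Fin d)) : G :=
  oprodBy F (fun z => ∑ i, ((z i : ℝ) - x i) * θ i)
    {z | (∃ t : ℝ, emb z = x + t • θ) ∧ F z ≠ 1}
section AuxStmt10
variable {α : Type*}

lemma keyPairwise.nodup {key : α → ℝ} {l : List α}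
    (h : l.Pairwise fun a b => key b < key a) : l.Nodup :=
  h.imp fun {a b} hab e => absurd hab (by simp [e])

lemma keySorted_unique {key : α → ℝ} {l₁ l₂ : List α}
    (h₁ : l₁.Pairwise fun a b => key b < key a)
    (h₂ : l₂.Pairwise fun a b => key b < key a)
    (hm : ∀ a, a ∈ l₁ ↔ a ∈ l₂) : l₁ = l₂ := by
  haveI : IsAntisymm α (fun a b => key b < key a) :=
    ⟨fun a b hab hba => absurd (hab.trans hba) (lt_irrefl _)⟩
  exact (fun p a b => List.Perm.eq_of_pairwise' a b p)
    ((List.perm_ext_iff_of_nodup (keyPairwise.nodup h₁) (keyPairwise.nodup h₂)).2 hm) h₁ h₂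

lemma exists_keySorted (key : α → ℝ) :
    ∀ s : Finset α, Set.InjOn key s →
      ∃ l : List α, (l.Pairwise fun a b => key b < key a) ∧ ∀ a, a ∈ l ↔ a ∈ s := by
  classical
  intro s
  induction s using Finset.strongInduction with
  | _ s ih =>
    intro hinj
    rcases s.eq_empty_or_nonempty with rfl | hne
    · exact ⟨[], by simp, by simp⟩
    · obtain ⟨m, hm, hmax⟩ := s.exists_max_image key hne
      obtain ⟨l, hl, hmem⟩ := ih (s.erase m) (Finset.erase_ssubset hm)
        (hinj.mono (by intro a ha; exact Finset.mem_of_mem_erase ha))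
      refine ⟨m :: l, List.pairwise_cons.2 ⟨?_, hl⟩, ?_⟩
      · intro b hb
        have hbs : b ∈ s.erase m := (hmem b).1 hb
        have hbs' := Finset.mem_of_mem_erase hbs
        have hne' : b ≠ m := Finset.ne_of_mem_erase hbs
        rcases (hmax b hbs').lt_or_eq with h | h
        · exact h
        · exact absurd (hinj hbs' hm h) hne'
      · intro a
        simp only [List.mem_cons, hmem, Finset.mem_erase]
        constructor
        · rintro (rfl | ⟨-, h⟩) <;> [exact hm; exact h]
        · intro ha
          by_cases h : a = m
          · exact Or.inl h
          · exact Or.inr ⟨h, ha⟩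

open Classical in
lemma triang_list_prod (w1 w2 u : α → ℂ) (key : α → ℝ) (Fθ : α → GL (Fin 2) ℂ)
    (hFθ : ∀ z, (Fθ z : Matrix (Fin 2) (Fin 2) ℂ) = !![w1 z, w2 z * u z; 0, 1]) :
    ∀ l : List α, (l.Pairwise fun a b => key b < key a) →
    (((l.map Fθ).prod : GL (Fin 2) ℂ) : Matrix (Fin 2) (Fin 2) ℂ) =
      !![(l.map w1).prod,
         (l.map fun y => w2 y *
            (((l.filter fun ζ => decide (key y < key ζ)).map w1).prod) * u y).sum;
         0, 1] := by
  intro l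
  induction l with
  | nil => simp [Matrix.one_fin_two]
  | cons h t ih =>
    intro hp
    obtain ⟨hkey, ht⟩ := List.pairwise_cons.1 hp
    rw [List.map_cons, List.prod_cons, Units.val_mul, hFθ, ih ht, Matrix.mul_fin_two]
    have hfh : ((h :: t).filter fun ζ => decide (key h < key ζ)) = [] := by
      rw [List.filter_eq_nil_iff]
      intro a ha
      simp only [decide_eq_true_eq]
      rcases List.mem_cons.1 ha with rfl | ha
      · exact lt_irrefl _
      · exact not_lt.2 (hkey a ha).le
    have hft : ∀ y ∈ t, ((h :: t).filter fun ζ => decide (key y < key ζ)) =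
        h :: (t.filter fun ζ => decide (key y < key ζ)) := by
      intro y hy
      rw [List.filter_cons_of_pos]
      simp [hkey y hy]
    have hsum : ((h :: t).map fun y => w2 y *
          ((((h :: t).filter fun ζ => decide (key y < key ζ)).map w1).prod) * u y).sum
        = w2 h * u h + w1 h * (t.map fun y => w2 y *
            (((t.filter fun ζ => decide (key y < key ζ)).map w1).prod) * u y).sum := by
      rw [List.map_cons, List.sum_cons, hfh]
      have : (t.map fun y => w2 y *
          ((((h :: t).filter fun ζ => decide (key y < key ζ)).map w1).prod) * u y)
          = t.map fun y => w1 h * (w2 y *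
            (((t.filter fun ζ => decide (key y < key ζ)).map w1).prod) * u y) := by
        apply List.map_congr_left
        intro y hy
        rw [hft y hy, List.map_cons, List.prod_cons]
        ring
      rw [this, List.sum_map_mul_left]
      simp
    rw [hsum, List.map_cons, List.prod_cons, add_comm (w2 h * u h)]
    simp

end AuxStmt10

/-- Theorem 3.1: the discrete non-abelian X-ray transform of the
upper-triangular matrix function F_θ(z) = [[w₁ z, (w₂ z)(u z)],[0,1]] along a line with
direction θ through a lattice point x equals [[S(w₁)(γ), P_W u(γ)],[0,1]], where
P_W u(γ) = Σ_{y ∈ γ ∩ ℤ^d} W(y,θ) u(y) and W(y,θ) = w₂(y) ∏_{ζ ∈ γ ∩ ℤ^d, (ζ−y)·θ > 0} w₁(ζ). -/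
theorem stmt10 (d : ℕ) (hd : 1 ≤ d) (r : ℝ) (hr : 0 < r)
    (θ : EuclideanSpace ℝ (Fin d)) (hθ : ‖θ‖ = 1)
    (w1 w2 u : (Fin d → ℤ) → ℂ)
    (hw1 : ∀ z, w1 z ≠ 0) (hw2 : ∀ z, w2 z ≠ 0)
    (hw1s : ∀ z : Fin d → ℤ, ¬ ‖emb z‖ ≤ r → w1 z = 1)
    (hw2s : ∀ z : Fin d → ℤ, ¬ ‖emb z‖ ≤ r → w2 z = 1)
    (hus : ∀ z : Fin d → ℤ, ¬ ‖emb z‖ ≤ r → u z = 0)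
    (Fθ : (Fin d → ℤ) → GL (Fin 2) ℂ)
    (hFθ : ∀ z, (Fθ z : Matrix (Fin 2) (Fin 2) ℂ) = !![w1 z, w2 z * u z; 0, 1])
    (x : Fin d → ℤ) :
    ((discS Fθ (emb x) θ : GL (Fin 2) ℂ) : Matrix (Fin 2) (Fin 2) ℂ) =
      !![∏ᶠ y ∈ {z : Fin d → ℤ | ∃ t : ℝ, emb z = emb x + t • θ}, w1 y,
         ∑ᶠ y ∈ {z : Fin d → ℤ | ∃ t : ℝ, emb z = emb x + t • θ},
           (w2 y * ∏ᶠ ζ ∈ {ζ : Fin d → ℤ | (∃ t : ℝ, emb ζ = emb x + t • θ) ∧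
              0 < ∑ i, ((ζ i : ℝ) - (y i : ℝ)) * θ i}, w1 ζ) * u y;
         0, 1] := by
  classical
  -- abbreviations (kept as plain terms for definitional matching)
  -- key z := ∑ i, ((z i : ℝ) - emb x i) * θ i
  have hθsum : ∑ i, θ i * θ i = 1 := by
    have h := EuclideanSpace.norm_eq θ
    rw [hθ] at h
    have h1 : ∑ i, ‖θ i‖^2 = 1 := Real.sqrt_eq_one.1 h.symm
    calc ∑ i, θ i * θ i = ∑ i, ‖θ i‖^2 := by
          apply Finset.sum_congr rfl; intro i _; simp [Real.norm_eq_abs, sq_abs, pow_two]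
      _ = 1 := h1
  have hkeyt : ∀ (z : Fin d → ℤ) (t : ℝ), emb z = emb x + t • θ →
      (∑ i, ((z i : ℝ) - emb x i) * θ i) = t := by
    intro z t h
    have hi : ∀ i, (z i : ℝ) = (x i : ℝ) + t * θ i := by
      intro i
      simpa [emb] using congrArg (fun v => v i) h
    calc (∑ i, ((z i : ℝ) - emb x i) * θ i) = ∑ i, t * (θ i * θ i) := by
          apply Finset.sum_congr rfl; intro i _; rw [hi i]
          show ((x i : ℝ) + t * θ i - (x i : ℝ)) * θ i = t * (θ i * θ i)
          ring
      _ = t := by rw [← Finset.mul_sum, hθsum, mul_one]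
  have hembinj : Function.Injective (emb (d := d)) := by
    intro a b h
    funext i
    exact_mod_cast show ((a i : ℝ)) = (b i : ℝ) from congrArg (fun v => v i) h
  have hkeyinj : Set.InjOn (fun z => ∑ i, ((z i : ℝ) - emb x i) * θ i)
      {z : Fin d → ℤ | ∃ t : ℝ, emb z = emb x + t • θ} := by
    rintro z₁ ⟨t₁, ht₁⟩ z₂ ⟨t₂, ht₂⟩ he
    have e1 := hkeyt z₁ t₁ ht₁
    have e2 := hkeyt z₂ t₂ ht₂
    have : t₁ = t₂ := by rw [← e1, ← e2]; exact he
    subst this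
    exact hembinj (ht₁.trans ht₂.symm)
  -- `Fθ z = 1` characterisation
  have hF1 : ∀ z, Fθ z = 1 ↔ (w1 z = 1 ∧ w2 z * u z = 0) := by
    intro z
    constructor
    · intro h
      have h2 := congrArg Units.val h
      rw [hFθ, Units.val_one, Matrix.one_fin_two] at h2
      exact ⟨by simpa using congrFun (congrFun h2 0) 0,
             by simpa using congrFun (congrFun h2 0) 1⟩
    · rintro ⟨h1, h2⟩
      apply Units.ext
      rw [hFθ, h1, h2, Units.val_one, Matrix.one_fin_two]
  have hFr : ∀ z : Fin d → ℤ, Fθ z ≠ 1 → ‖emb z‖ ≤ r := by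
    intro z h
    by_contra hn
    exact h ((hF1 z).2 ⟨hw1s z hn, by rw [hus z hn, mul_zero]⟩)
  -- finiteness of the support
  have hbox : {z : Fin d → ℤ | ‖emb z‖ ≤ r}.Finite := by
    apply Set.Finite.subset (Finset.finite_toSet
      (Finset.Icc (fun _ : Fin d => -⌈r⌉) (fun _ => ⌈r⌉)))
    intro z hz
    simp only [Set.mem_setOf_eq] at hz
    simp only [Finset.coe_Icc, Set.mem_Icc, Pi.le_def]
    have habs : ∀ i, |(z i : ℝ)| ≤ r := by
      intro i
      refine le_trans ?_ hz
      rw [EuclideanSpace.norm_eq]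
      have : |(z i : ℝ)| = Real.sqrt (‖emb z i‖^2) := by
        rw [Real.sqrt_sq_eq_abs]; simp [emb]
      rw [this]
      exact Real.sqrt_le_sqrt (Finset.single_le_sum (f := fun j => ‖emb z j‖^2)
        (fun j _ => sq_nonneg _) (Finset.mem_univ i))
    constructor
    · intro i
      have h1 := (abs_le.1 (habs i)).1
      have h2 : -(⌈r⌉ : ℝ) ≤ (z i : ℝ) := le_trans (neg_le_neg (Int.le_ceil r)) h1
      exact_mod_cast h2
    · intro i
      have h1 := (abs_le.1 (habs i)).2
      have h2 : (z i : ℝ) ≤ (⌈r⌉ : ℝ) := le_trans h1 (Int.le_ceil r)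
      exact_mod_cast h2
  have hsupp_fin : ({z : Fin d → ℤ |
      (∃ t : ℝ, emb z = emb x + t • θ) ∧ Fθ z ≠ 1}).Finite := by
    apply hbox.subset
    rintro z ⟨-, hz⟩
    exact hFr z hz
  -- the sorted enumeration of the support
  obtain ⟨l, hl, hlm0⟩ := exists_keySorted (fun z => ∑ i, ((z i : ℝ) - emb x i) * θ i)
    hsupp_fin.toFinset (by
      apply hkeyinj.mono
      intro z hz
      exact (hsupp_fin.mem_toFinset.1 hz).1)
  have hlm : ∀ a, a ∈ l ↔ a ∈ {z : Fin d → ℤ |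
      (∃ t : ℝ, emb z = emb x + t • θ) ∧ Fθ z ≠ 1} := by
    intro a
    rw [hlm0 a, hsupp_fin.mem_toFinset]
  have hnodup : l.Nodup := keyPairwise.nodup hl
  -- evaluate the transform via the list
  have hex : ∃ l' : List (Fin d → ℤ),
      (l'.Pairwise fun a b => (∑ i, ((b i : ℝ) - emb x i) * θ i) <
        ∑ i, ((a i : ℝ) - emb x i) * θ i) ∧
      ∀ a, a ∈ l' ↔ a ∈ {z : Fin d → ℤ |
        (∃ t : ℝ, emb z = emb x + t • θ) ∧ Fθ z ≠ 1} := ⟨l, hl, hlm⟩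
  have hS : discS Fθ (emb x) θ = (l.map Fθ).prod := by
    show oprodBy Fθ (fun z => ∑ i, ((z i : ℝ) - emb x i) * θ i)
      {z | (∃ t : ℝ, emb z = emb x + t • θ) ∧ Fθ z ≠ 1} = (l.map Fθ).prod
    rw [oprodBy, dif_pos hex]
    congr 1
    congr 1
    exact keySorted_unique hex.choose_spec.1 hl
      fun a => (hex.choose_spec.2 a).trans ((hlm a).symm)
  rw [hS, triang_list_prod w1 w2 u (fun z => ∑ i, ((z i : ℝ) - emb x i) * θ i) Fθ hFθ l hl]
  -- convert the finprod / finsum on the right to list expressions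
  have hne1 : ∀ ζ, w1 ζ ≠ 1 → Fθ ζ ≠ 1 := fun ζ h h' => h ((hF1 ζ).1 h').1
  have hneu : ∀ y, u y ≠ 0 → Fθ y ≠ 1 := by
    intro y h h'
    exact h (by
      have := ((hF1 y).1 h').2
      exact (mul_eq_zero.1 this).resolve_left (hw2 y))
  have eleft : ∏ᶠ y ∈ {z : Fin d → ℤ | ∃ t : ℝ, emb z = emb x + t • θ}, w1 y
      = (l.map w1).prod := by
    rw [finprod_mem_eq_prod_of_inter_mulSupport_eq w1 (t := l.toFinset) (by
      ext ζ
      simp only [Set.mem_inter_iff, Set.mem_setOf_eq, Finset.coe_sort_coe,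
        Finset.mem_coe, List.mem_toFinset, Function.mem_mulSupport]
      constructor
      · rintro ⟨hζL, hζ1⟩
        exact ⟨(hlm ζ).2 ⟨hζL, hne1 ζ hζ1⟩, hζ1⟩
      · rintro ⟨hζl, hζ1⟩
        exact ⟨((hlm ζ).1 hζl).1, hζ1⟩)]
    exact List.prod_toFinset w1 hnodup
  have hdiff : ∀ y ζ : Fin d → ℤ, (∑ i, ((ζ i : ℝ) - (y i : ℝ)) * θ i)
      = (∑ i, ((ζ i : ℝ) - emb x i) * θ i) - ∑ i, ((y i : ℝ) - emb x i) * θ i := by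
    intro y ζ
    rw [← Finset.sum_sub_distrib]
    apply Finset.sum_congr rfl
    intro i _
    ring
  have inner : ∀ y : Fin d → ℤ,
      ∏ᶠ ζ ∈ {ζ : Fin d → ℤ | (∃ t : ℝ, emb ζ = emb x + t • θ) ∧
        0 < ∑ i, ((ζ i : ℝ) - (y i : ℝ)) * θ i}, w1 ζ
      = (((l.filter fun ζ => decide ((∑ i, ((y i : ℝ) - emb x i) * θ i) <
          ∑ i, ((ζ i : ℝ) - emb x i) * θ i)).map w1).prod) := by
    intro y
    rw [finprod_mem_eq_prod_of_inter_mulSupport_eq w1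
      (t := (l.filter fun ζ => decide ((∑ i, ((y i : ℝ) - emb x i) * θ i) <
          ∑ i, ((ζ i : ℝ) - emb x i) * θ i)).toFinset) (by
      ext ζ
      simp only [Set.mem_inter_iff, Set.mem_setOf_eq, Finset.mem_coe,
        List.mem_toFinset, Function.mem_mulSupport, List.mem_filter,
        decide_eq_true_eq]
      constructor
      · rintro ⟨⟨hζL, hζpos⟩, hζ1⟩
        rw [hdiff y ζ, sub_pos] at hζpos
        exact ⟨⟨(hlm ζ).2 ⟨hζL, hne1 ζ hζ1⟩, hζpos⟩, hζ1⟩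
      · rintro ⟨⟨hζl, hζpos⟩, hζ1⟩
        refine ⟨⟨((hlm ζ).1 hζl).1, ?_⟩, hζ1⟩
        rw [hdiff y ζ, sub_pos]
        exact hζpos)]
    exact List.prod_toFinset w1 (hnodup.filter _)
  have eright : ∑ᶠ y ∈ {z : Fin d → ℤ | ∃ t : ℝ, emb z = emb x + t • θ},
      (w2 y * ∏ᶠ ζ ∈ {ζ : Fin d → ℤ | (∃ t : ℝ, emb ζ = emb x + t • θ) ∧
        0 < ∑ i, ((ζ i : ℝ) - (y i : ℝ)) * θ i}, w1 ζ) * u y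
      = (l.map fun y => w2 y *
          (((l.filter fun ζ => decide ((∑ i, ((y i : ℝ) - emb x i) * θ i) <
            ∑ i, ((ζ i : ℝ) - emb x i) * θ i)).map w1).prod) * u y).sum := by
    rw [finsum_mem_eq_sum_of_inter_support_eq _ (t := l.toFinset) (by
      ext y
      simp only [Set.mem_inter_iff, Set.mem_setOf_eq, Finset.mem_coe,
        List.mem_toFinset, Function.mem_support]
      constructor
      · rintro ⟨hyL, hy0⟩
        have hu : u y ≠ 0 := fun h => hy0 (by rw [h, mul_zero])
        exact ⟨(hlm y).2 ⟨hyL, hneu y hu⟩, hy0⟩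
      · rintro ⟨hyl, hy0⟩
        exact ⟨((hlm y).1 hyl).1, hy0⟩)]
    rw [Finset.sum_congr rfl (fun y _ => by rw [inner y])]
    exact List.sum_toFinset _ hnodup
  rw [eleft, eright]
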